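/- Let α ≠ 0 and β ≥ 0 be constants, n a positive integer, and x_t a nonnegative differentiable function satisfying ∂_t x_t ≤ α n x_t + β n² x_t^{1 − 1/n} for t ≥ t_0. Then x_t^{1/n} ≤ x_{t_0}^{1/n} e^{α(t − t_0)} + (βn/α)(e^{α(t − t_0)} − 1) for all t ≥ t_0. -/

import Mathlib

open Real Set Filter
open scoped Topology

/-- Power-type Grönwall inequality (Proposition C.1). -/
theorem gronwall_power (α β : ℝ) (hα : α ≠ 0) (hβ : 0 ≤ β) (n : ℕ) (hn : 0 < n)
    (t₀ : ℝ) (x : ℝ → ℝ) (hx : Differentiable ℝ x) (hxpos : ∀ t, 0 ≤ x t)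
    (hineq : ∀ t ≥ t₀, deriv x t ≤ α * n * x t + β * n ^ 2 * x t ^ (1 - 1 / (n : ℝ))) :
    ∀ t ≥ t₀, x t ^ (1 / (n : ℝ)) ≤
      x t₀ ^ (1 / (n : ℝ)) * Real.exp (α * (t - t₀)) +
        (β * n / α) * (Real.exp (α * (t - t₀)) - 1) := by
  intro t ht
  have hn0 : (0 : ℝ) < (n : ℝ) := by exact_mod_cast hn
  have hp : (0 : ℝ) < 1 / (n : ℝ) := by positivity
  -- Key bound for every ε > 0
  have key : ∀ ε : ℝ, 0 < ε → (x t + ε) ^ (1 / (n : ℝ)) ≤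
      gronwallBound ((x t₀ + ε) ^ (1 / (n : ℝ))) α (β * n + |α| * ε ^ (1 / (n : ℝ))) (t - t₀) := by
    intro ε hε
    set f : ℝ → ℝ := fun s => (x s + ε) ^ (1 / (n : ℝ)) with hf_def
    have hxε : ∀ s, 0 < x s + ε := fun s => by have := hxpos s; linarith
    have hderiv : ∀ s, HasDerivAt f
        (deriv x s * (1 / (n : ℝ)) * (x s + ε) ^ ((1 / (n : ℝ)) - 1)) s := by
      intro s
      exact (((hx s).hasDerivAt).add_const ε).rpow_const (Or.inl (hxε s).ne')
    set f' : ℝ → ℝ := fun s => deriv x s * (1 / (n : ℝ)) * (x s + ε) ^ ((1 / (n : ℝ)) - 1)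
      with hf'_def
    have hcont : ContinuousOn f (Icc t₀ t) :=
      fun s _ => ((hderiv s).continuousAt).continuousWithinAt
    have hslope : ∀ s ∈ Ico t₀ t, ∀ r, f' s < r →
        ∃ᶠ z in 𝓝[>] s, (z - s)⁻¹ * (f z - f s) < r := by
      intro s _ r hr
      have := ((hderiv s).hasDerivWithinAt (s := Ici s)).liminf_right_slope_le hr
      refine this.mono fun z hz => ?_
      rwa [slope_def_field, div_eq_inv_mul] at hz
    have hbound : ∀ s ∈ Ico t₀ t, f' s ≤ α * f s + (β * n + |α| * ε ^ (1 / (n : ℝ))) := by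
      intro s hs
      have hxs := hxpos s
      have hxεs := hxε s
      set p : ℝ := (x s + ε) ^ ((1 / (n : ℝ)) - 1) with hp_def
      have hppos : 0 < p := rpow_pos_of_pos hxεs _
      have h1 : f' s ≤ (α * n * x s + β * n ^ 2 * x s ^ (1 - 1 / (n : ℝ))) * (1 / (n : ℝ)) * p := by
        have h := hineq s hs.1
        have h2 := mul_le_mul_of_nonneg_right h
          (show (0:ℝ) ≤ 1 / (n : ℝ) * p by positivity)
        show deriv x s * (1 / (n : ℝ)) * (x s + ε) ^ ((1 / (n : ℝ)) - 1) ≤ _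
        rw [← hp_def]
        ring_nf at h2 ⊢
        linarith
      refine h1.trans ?_
      have hterm2 : β * n ^ 2 * x s ^ (1 - 1 / (n : ℝ)) * (1 / (n : ℝ)) * p ≤ β * n := by
        have hmono : x s ^ (1 - 1 / (n : ℝ)) ≤ (x s + ε) ^ (1 - 1 / (n : ℝ)) := by
          apply rpow_le_rpow hxs (by linarith) ?_
          have : 1 / (n : ℝ) ≤ 1 := by
            rw [div_le_one hn0]; exact_mod_cast hn
          linarith
        have hprod : (x s + ε) ^ (1 - 1 / (n : ℝ)) * p = 1 := by
          rw [hp_def, ← rpow_add hxεs]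
          norm_num
        calc β * n ^ 2 * x s ^ (1 - 1 / (n : ℝ)) * (1 / (n : ℝ)) * p
            ≤ β * n ^ 2 * (x s + ε) ^ (1 - 1 / (n : ℝ)) * (1 / (n : ℝ)) * p := by
              have : (0:ℝ) ≤ β * n ^ 2 * (1 / (n : ℝ)) * p := by positivity
              nlinarith [mul_le_mul_of_nonneg_left hmono (by positivity : (0:ℝ) ≤ β * n ^ 2),
                hppos.le, hp.le]
          _ = β * n ^ 2 * (1 / (n : ℝ)) * ((x s + ε) ^ (1 - 1 / (n : ℝ)) * p) := by ring
          _ = β * n ^ 2 * (1 / (n : ℝ)) := by rw [hprod, mul_one]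
          _ = β * n := by field_simp
      have hterm1 : α * n * x s * (1 / (n : ℝ)) * p ≤ α * f s + |α| * ε ^ (1 / (n : ℝ)) := by
        have hxp : α * n * x s * (1 / (n : ℝ)) * p = α * (x s * p) := by
          field_simp
        have hsplit : x s * p = (x s + ε) * p - ε * p := by ring
        have hfp : (x s + ε) * p = f s := by
          rw [hp_def, hf_def]
          rw [show (x s + ε) * (x s + ε) ^ ((1 / (n : ℝ)) - 1)
              = (x s + ε) ^ (1 : ℝ) * (x s + ε) ^ ((1 / (n : ℝ)) - 1) by rw [rpow_one],
            ← rpow_add hxεs]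
          norm_num
        have hεp : ε * p ≤ ε ^ (1 / (n : ℝ)) := by
          have hple : p ≤ ε ^ ((1 / (n : ℝ)) - 1) :=
            rpow_le_rpow_of_nonpos hε (by linarith) (by
              have : 1 / (n : ℝ) ≤ 1 := by rw [div_le_one hn0]; exact_mod_cast hn
              linarith)
          calc ε * p ≤ ε * ε ^ ((1 / (n : ℝ)) - 1) := by
                exact mul_le_mul_of_nonneg_left hple hε.le
            _ = ε ^ (1 : ℝ) * ε ^ ((1 / (n : ℝ)) - 1) := by rw [rpow_one]
            _ = ε ^ (1 / (n : ℝ)) := by rw [← rpow_add hε]; norm_num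
        have hεp0 : 0 ≤ ε * p := by positivity
        rw [hxp, hsplit, mul_sub, hfp]
        have h1 : -(α * (ε * p)) ≤ |α| * (ε * p) := by
          have := neg_abs_le α
          nlinarith
        have h2 : |α| * (ε * p) ≤ |α| * ε ^ (1 / (n : ℝ)) :=
          mul_le_mul_of_nonneg_left hεp (abs_nonneg α)
        linarith
      calc (α * n * x s + β * n ^ 2 * x s ^ (1 - 1 / (n : ℝ))) * (1 / (n : ℝ)) * p
          = α * n * x s * (1 / (n : ℝ)) * p
            + β * n ^ 2 * x s ^ (1 - 1 / (n : ℝ)) * (1 / (n : ℝ)) * p := by ring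
        _ ≤ (α * f s + |α| * ε ^ (1 / (n : ℝ))) + β * n := by
            exact add_le_add hterm1 hterm2
        _ = α * f s + (β * n + |α| * ε ^ (1 / (n : ℝ))) := by ring
    have := le_gronwallBound_of_liminf_deriv_right_le hcont hslope le_rfl hbound t
      ⟨ht, le_rfl⟩
    exact this
  -- Pass to the limit ε → 0⁺
  have hRHS : gronwallBound (x t₀ ^ (1 / (n : ℝ))) α (β * n) (t - t₀)
      = x t₀ ^ (1 / (n : ℝ)) * Real.exp (α * (t - t₀)) +
        (β * n / α) * (Real.exp (α * (t - t₀)) - 1) := by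
    rw [gronwallBound_of_K_ne_0 hα]
  rw [← hRHS]
  have htend : Tendsto (fun ε : ℝ =>
      gronwallBound ((x t₀ + ε) ^ (1 / (n : ℝ))) α (β * n + |α| * ε ^ (1 / (n : ℝ))) (t - t₀))
      (𝓝[>] (0:ℝ)) (𝓝 (gronwallBound (x t₀ ^ (1 / (n : ℝ))) α (β * n) (t - t₀))) := by
    have h1 : Tendsto (fun ε : ℝ => (x t₀ + ε) ^ (1 / (n : ℝ))) (𝓝[>] (0:ℝ))
        (𝓝 (x t₀ ^ (1 / (n : ℝ)))) := by
      have : ContinuousAt (fun ε : ℝ => (x t₀ + ε) ^ (1 / (n : ℝ))) 0 := by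
        apply ContinuousAt.rpow_const (by fun_prop)
        right; positivity
      simpa using this.tendsto.mono_left (nhdsWithin_le_nhds (s := Set.Ioi (0:ℝ)))
    have h2 : Tendsto (fun ε : ℝ => β * n + |α| * ε ^ (1 / (n : ℝ))) (𝓝[>] (0:ℝ))
        (𝓝 (β * n)) := by
      have : ContinuousAt (fun ε : ℝ => β * (n:ℝ) + |α| * ε ^ (1 / (n : ℝ))) 0 := by
        apply ContinuousAt.add continuousAt_const
        apply ContinuousAt.mul continuousAt_const
        exact Real.continuousAt_rpow_const 0 _ (Or.inr hp.le)
      have h0 : β * (n:ℝ) + |α| * (0:ℝ) ^ (1 / (n:ℝ)) = β * n := by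
        rw [Real.zero_rpow hp.ne']; ring
      have ht' := this.tendsto.mono_left (nhdsWithin_le_nhds (s := Set.Ioi (0:ℝ)))
      rwa [h0] at ht'
    rw [gronwallBound_of_K_ne_0 hα]
    simp only [gronwallBound_of_K_ne_0 hα]
    exact (h1.mul tendsto_const_nhds).add
      (((h2.div_const α)).mul tendsto_const_nhds)
  refine ge_of_tendsto htend ?_
  filter_upwards [self_mem_nhdsWithin] with ε (hε : 0 < ε)
  exact le_trans (rpow_le_rpow (hxpos t) (by linarith) hp.le) (key ε hε)
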